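/- Let q ∈ ℂ with 0 < |q| < 1, let a ∈ ℂ, let x, t ∈ ℂ with x ≠ 0, t ≠ 0, and suppose q^{m}·t/x ≠ 1 for every integer m ≥ 1. Define F(u) = ∏_{k=0}^∞ (1 − a q^{k+1} u)/(1 − q^{k+1} u) (the infinite products converge for 0 < |q| < 1). Then the q-derivative in t of the kernel K(t,x) = F(t/x) satisfies (K(t,x) − K(qt,x))/((1−q)t) = (q/((1−q)x))·(K(t,x) − a·K(t, x/q)); equivalently, D_q,t K(t,x) = (q/((1−q)x))·(1 − a·T_x^{-1}) K(t,x). -/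

import Mathlib

/-- The `q`-analogue of the Euler kernel:
`F(u) = ∏_{k=0}^∞ (1 − a q^{k+1} u)/(1 − q^{k+1} u)`. -/
noncomputable def kernelF (q a u : ℂ) : ℂ :=
  ∏' k : ℕ, (1 - a * q ^ (k + 1) * u) / (1 - q ^ (k + 1) * u)

lemma hasProd_zero_of_eq_zero {f : ℕ → ℂ} (k0 : ℕ) (hk : f k0 = 0) : HasProd f 0 := by
  have hev : ∀ᶠ s : Finset ℕ in Filter.atTop, ∏ i ∈ s, f i = 0 := by
    filter_upwards [Filter.eventually_ge_atTop ({k0} : Finset ℕ)] with s hs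
    exact Finset.prod_eq_zero (hs (Finset.mem_singleton_self k0)) hk
  exact Filter.Tendsto.congr' (hev.mono fun s hs => hs.symm) tendsto_const_nhds

lemma kernel_multipliable (q a u : ℂ) (hq1 : ‖q‖ < 1)
    (hden : ∀ k : ℕ, 1 - q ^ (k + 1) * u ≠ 0) :
    Multipliable (fun k : ℕ => (1 - a * q ^ (k + 1) * u) / (1 - q ^ (k + 1) * u)) := by
  by_cases hz : ∃ k0 : ℕ, 1 - a * q ^ (k0 + 1) * u = 0
  · obtain ⟨k0, hk0⟩ := hz
    exact ⟨0, hasProd_zero_of_eq_zero k0 (by rw [hk0, zero_div])⟩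
  · push_neg at hz
    refine Complex.multipliable_of_summable_log ?_
    -- Summable of logs
    set C : ℝ := ‖1 - a‖ + 1 with hC
    have hC0 : 0 < C := by positivity
    clear_value C
    have htend : Filter.Tendsto (fun k : ℕ => ‖q ^ (k + 1) * u‖) Filter.atTop (nhds 0) := by
      have : Filter.Tendsto (fun k : ℕ => ‖q‖ ^ (k + 1) * ‖u‖) Filter.atTop (nhds (0 * ‖u‖)) := by
        exact (((tendsto_pow_atTop_nhds_zero_of_lt_one (norm_nonneg q) hq1).comp
          (Filter.tendsto_add_atTop_nat 1))).mul_const _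
      simpa [norm_mul, norm_pow] using this
    have hε : (0 : ℝ) < min (1/2) (1 / (8 * C)) := by positivity
    have hev := htend.eventually (eventually_lt_nhds hε)
    apply Summable.of_norm_bounded_eventually_nat
      (g := fun k => (3 * C * ‖u‖ * ‖q‖) * ‖q‖ ^ k)
      (((summable_geometric_of_lt_one (norm_nonneg q) hq1)).mul_left _)
    filter_upwards [hev] with k hk
    have hk1 : ‖q ^ (k + 1) * u‖ ≤ 1/2 := (hk.trans_le (min_le_left _ _)).le
    have hk2 : ‖q ^ (k + 1) * u‖ ≤ 1 / (8 * C) := (hk.trans_le (min_le_right _ _)).le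
    set w : ℂ := q ^ (k + 1) * u with hw
    have hdenk : (1 : ℂ) - w ≠ 0 := hden k
    have hdlb : (1:ℝ)/2 ≤ ‖(1 : ℂ) - w‖ := by
      have := norm_sub_norm_le (1 : ℂ) w
      simp only [norm_one] at this
      linarith
    set z : ℂ := (1 - a) * w / (1 - w) with hzdef
    have hfac : (1 - a * q ^ (k + 1) * u) / (1 - q ^ (k + 1) * u) = 1 + z := by
      rw [hzdef, ← hw]
      field_simp
      ring
    have hznorm : ‖z‖ ≤ 2 * C * ‖w‖ := by
      rw [hzdef, norm_div, norm_mul]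
      rw [div_le_iff₀ (by linarith)]
      have h1 : ‖1 - a‖ ≤ C := by simp [hC]
      have h1w : ‖1 - a‖ * ‖w‖ ≤ C * ‖w‖ := mul_le_mul_of_nonneg_right h1 (norm_nonneg w)
      have h2w : 2 * C * ‖w‖ * (1/2) ≤ 2 * C * ‖w‖ * ‖1 - w‖ := by
        apply mul_le_mul_of_nonneg_left hdlb (by positivity)
      nlinarith
    have hzhalf : ‖z‖ ≤ 1/2 := by
      have h3 : 2 * C * ‖w‖ ≤ 2 * C * (1 / (8 * C)) :=
        mul_le_mul_of_nonneg_left hk2 (by positivity)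
      have h4 : 2 * C * (1 / (8 * C)) = 1/4 := by field_simp; ring
      nlinarith
    calc ‖Complex.log ((1 - a * q ^ (k + 1) * u) / (1 - q ^ (k + 1) * u))‖
        = ‖Complex.log (1 + z)‖ := by rw [hfac]
      _ ≤ (3/2) * ‖z‖ := Complex.norm_log_one_add_half_le_self hzhalf
      _ ≤ (3/2) * (2 * C * ‖w‖) := by linarith [mul_le_mul_of_nonneg_left hznorm (by norm_num : (0:ℝ) ≤ 3/2)]
      _ = (3 * C * ‖u‖ * ‖q‖) * ‖q‖ ^ k := by
          have hwn : ‖w‖ = ‖q‖ ^ (k + 1) * ‖u‖ := by rw [hw, norm_mul, norm_pow]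
          rw [hwn, pow_succ]; ring

lemma kernel_key (q a u : ℂ) (hq1 : ‖q‖ < 1)
    (hden : ∀ k : ℕ, 1 - q ^ (k + 1) * u ≠ 0) :
    kernelF q a u * (1 - q * u) = (1 - a * q * u) * kernelF q a (q * u) := by
  have hden' : ∀ k : ℕ, 1 - q ^ (k + 1) * (q * u) ≠ 0 := by
    intro k
    have := hden (k + 1)
    have he : q ^ (k + 1 + 1) * u = q ^ (k + 1) * (q * u) := by ring
    rwa [he] at this
  have hm' := kernel_multipliable q a (q * u) hq1 hden'
  have hm2 : Multipliable (fun n : ℕ =>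
      (1 - a * q ^ (n + 1 + 1) * u) / (1 - q ^ (n + 1 + 1) * u)) := by
    apply hm'.congr
    intro n
    congr 1 <;> ring
  have hpeel : kernelF q a u
      = (1 - a * q ^ (0 + 1) * u) / (1 - q ^ (0 + 1) * u) *
        ∏' k : ℕ, (1 - a * q ^ (k + 1 + 1) * u) / (1 - q ^ (k + 1 + 1) * u) :=
    tprod_eq_zero_mul' hm2
  have hshift : (∏' k : ℕ, (1 - a * q ^ (k + 1 + 1) * u) / (1 - q ^ (k + 1 + 1) * u))
      = kernelF q a (q * u) := by
    unfold kernelF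
    apply tprod_congr
    intro k
    congr 1 <;> ring
  rw [hpeel, hshift]
  have h0 : (1 : ℂ) - q ^ (0 + 1) * u ≠ 0 := hden 0
  simp only [pow_one, zero_add] at h0 ⊢
  field_simp

/-- The `q`-derivative in `t` of the kernel `K(t,x) = F(t/x)` satisfies
`D_{q,t} K(t,x) = (q/((1−q)x))·(1 − a T_x⁻¹) K(t,x)`. -/
theorem kernel_qDeriv (q a x t : ℂ) (hq0 : 0 < ‖q‖) (hq1 : ‖q‖ < 1)
    (hx : x ≠ 0) (ht : t ≠ 0) (h : ∀ m : ℕ, 1 ≤ m → q ^ m * t / x ≠ 1) :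
    (kernelF q a (t / x) - kernelF q a (q * t / x)) / ((1 - q) * t) =
      (q / ((1 - q) * x)) *
        (kernelF q a (t / x) - a * kernelF q a (t / (x / q))) := by
  have hqne : q ≠ 0 := by simpa using hq0.ne'
  have hq1' : q ≠ 1 := by rintro rfl; simp at hq1
  have h1q : (1 : ℂ) - q ≠ 0 := sub_ne_zero.mpr hq1'.symm
  set u : ℂ := t / x with hu
  have hden : ∀ k : ℕ, 1 - q ^ (k + 1) * u ≠ 0 := by
    intro k heq
    apply h (k + 1) (Nat.le_add_left 1 k)
    have h2 : q ^ (k + 1) * u = 1 := by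
      have := sub_eq_zero.mp heq
      exact this.symm
    calc q ^ (k + 1) * t / x = q ^ (k + 1) * u := by rw [hu, mul_div_assoc]
      _ = 1 := h2
  have harg1 : q * t / x = q * u := by rw [hu]; ring
  have harg2 : t / (x / q) = q * u := by
    rw [hu]; field_simp
  rw [harg1, harg2]
  have key := kernel_key q a u hq1 hden
  set A := kernelF q a u
  set B := kernelF q a (q * u)
  have hux : u * x = t := by rw [hu]; field_simp
  have key2 : (A - B) * x = q * t * (A - a * B) := by
    linear_combination x * key + (A * q - a * q * B) * hux
  field_simp
  linear_combination key2
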